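/- arXiv:1403.2485 — 6 statements merged into one kernel-verified Lean document; each statement's English description precedes it below -/
import Mathlib

section
/- Let F : ℝ → ℝ be strictly convex and differentiable, and let B_F(p:q) := F(p) − F(q) − (p − q)·F'(q). Let x_1, ..., x_n be reals (n ≥ 1) with positive weights w_1, ..., w_n, and let μ := (Σ_l w_l x_l)/(Σ_l w_l) be the weighted mean. Then for every q ∈ ℝ, Σ_l w_l·B_F(x_l : μ) ≤ Σ_l w_l·B_F(x_l : q), with equality if and only if q = μ. In other words, the weighted mean is the unique minimizer of the weighted sum of right-sided Bregman divergences. -/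
/-- The Bregman divergence `B_F(p:q) = F(p) − F(q) − (p − q)·F'(q)`. -/
noncomputable def breg (F : ℝ → ℝ) (p q : ℝ) : ℝ :=
  F p - F q - (p - q) * deriv F q

lemma breg_pos (F : ℝ → ℝ) (hF : StrictConvexOn ℝ Set.univ F)
    (hFd : Differentiable ℝ F) {p q : ℝ} (h : p ≠ q) : 0 < breg F p q := by
  unfold breg
  rcases lt_or_gt_of_ne h with hpq | hpq
  · have hs := hF.slope_lt_deriv (Set.mem_univ p) (Set.mem_univ q) hpq (hFd q)
    rw [slope_def_field, div_lt_iff₀ (by linarith)] at hs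
    nlinarith
  · have hs := hF.deriv_lt_slope (Set.mem_univ q) (Set.mem_univ p) hpq (hFd q)
    rw [slope_def_field, lt_div_iff₀ (by linarith)] at hs
    nlinarith

theorem stmt5 (F : ℝ → ℝ) (hF : StrictConvexOn ℝ Set.univ F)
    (hFd : Differentiable ℝ F)
    (n : ℕ) (hn : 1 ≤ n) (x w : Fin n → ℝ) (hw : ∀ l, 0 < w l)
    (μ : ℝ) (hμ : μ = (∑ l, w l * x l) / (∑ l, w l)) :
    ∀ q : ℝ,
      (∑ l, w l * breg F (x l) μ) ≤ (∑ l, w l * breg F (x l) q) ∧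
      ((∑ l, w l * breg F (x l) μ) = (∑ l, w l * breg F (x l) q) ↔ q = μ) := by
  have hne : (Finset.univ : Finset (Fin n)).Nonempty := by
    simpa [Finset.univ_nonempty_iff] using Fin.pos_iff_nonempty.mp hn
  have hW : 0 < ∑ l, w l := Finset.sum_pos (fun l _ => hw l) hne
  have hsum : ∑ l, w l * x l = (∑ l, w l) * μ := by
    rw [hμ]; field_simp
  have key : ∀ q, ∑ l, w l * breg F (x l) q
      = (∑ l, w l * F (x l)) - (∑ l, w l) * F q
        - ((∑ l, w l) * μ - (∑ l, w l) * q) * deriv F q := by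
    intro q
    rw [← hsum]
    rw [Finset.sum_congr rfl (fun l _ => show w l * breg F (x l) q
      = w l * F (x l) - w l * F q - (w l * x l - w l * q) * deriv F q by unfold breg; ring)]
    rw [Finset.sum_sub_distrib, Finset.sum_sub_distrib, ← Finset.sum_mul, ← Finset.sum_mul,
      Finset.sum_sub_distrib, ← Finset.sum_mul]
  have hdiff : ∀ q, ∑ l, w l * breg F (x l) q
      = (∑ l, w l * breg F (x l) μ) + (∑ l, w l) * breg F μ q := by
    intro q; rw [key q, key μ]; unfold breg; ring
  intro q
  by_cases hq : q = μ
  · subst hq; exact ⟨le_refl _, by simp⟩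
  · have hpos : 0 < (∑ l, w l) * breg F μ q :=
      mul_pos hW (breg_pos F hF hFd (fun h => hq h.symm))
    rw [hdiff q]
    exact ⟨by linarith, by constructor <;> intro h <;> [linarith; exact absurd h hq]⟩
end

section
/- Let F : ℝ → ℝ be strictly convex and differentiable, and let B_F(p:q) := F(p) − F(q) − (p − q)·F'(q). Let x_1, ..., x_n be reals (n ≥ 1) with positive weights w_1, ..., w_n, W := Σ_l w_l, and μ := (Σ_l w_l x_l)/W the weighted mean. Then the minimum over q ∈ ℝ of Σ_l w_l·B_F(x_l : q) is attained at q = μ and equals W·(μ·F'(μ) − F(μ)) + Σ_l w_l·F(x_l) − F'(μ)·Σ_l w_l·x_l. -/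
/-- Tangent line inequality for a convex differentiable function. -/
lemma tangent_le (F : ℝ → ℝ) (hF : ConvexOn ℝ Set.univ F)
    (hFd : Differentiable ℝ F) (q μ : ℝ) :
    F q + (μ - q) * deriv F q ≤ F μ := by
  rcases lt_trichotomy q μ with h | h | h
  · have := hF.deriv_le_slope (Set.mem_univ q) (Set.mem_univ μ) h (hFd q)
    rw [slope_def_field] at this
    have h' : 0 < μ - q := by linarith
    rw [le_div_iff₀ h'] at this
    nlinarith
  · simp [h]
  · have := hF.slope_le_deriv (Set.mem_univ μ) (Set.mem_univ q) h (hFd q)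
    rw [slope_def_field] at this
    have h' : 0 < q - μ := by linarith
    rw [div_le_iff₀ h'] at this
    nlinarith

theorem stmt6 (F : ℝ → ℝ) (hF : StrictConvexOn ℝ Set.univ F)
    (hFd : Differentiable ℝ F)
    (n : ℕ) (hn : 1 ≤ n) (x w : Fin n → ℝ) (hw : ∀ l, 0 < w l)
    (W μ : ℝ) (hW : W = ∑ l, w l) (hμ : μ = (∑ l, w l * x l) / W) :
    (∀ q : ℝ, (∑ l, w l * breg F (x l) μ) ≤ (∑ l, w l * breg F (x l) q)) ∧
    (∑ l, w l * breg F (x l) μ) =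
      W * (μ * deriv F μ - F μ) + (∑ l, w l * F (x l))
        - deriv F μ * (∑ l, w l * x l) := by
  have hWpos : 0 < W := by
    rw [hW]
    apply Finset.sum_pos (fun l _ => hw l)
    exact Finset.univ_nonempty_iff.mpr ⟨⟨0, hn⟩⟩
  have hsum : ∑ l, w l * x l = W * μ := by
    rw [hμ]; field_simp
  have key : ∀ q : ℝ, (∑ l, w l * breg F (x l) q) =
      (∑ l, w l * F (x l)) - W * F q - (W * μ - W * q) * deriv F q := by
    intro q
    simp only [breg, mul_sub]
    rw [Finset.sum_sub_distrib, Finset.sum_sub_distrib]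
    simp only [← mul_assoc]
    rw [← Finset.sum_mul, ← Finset.sum_mul]
    have : ∑ l, w l * (x l - q) = W * μ - W * q := by
      simp only [mul_sub]
      rw [Finset.sum_sub_distrib, hsum, ← Finset.sum_mul, ← hW]
    rw [this, ← hW]

  constructor
  · intro q
    rw [key q, key μ]
    have := tangent_le F hF.convexOn hFd q μ
    nlinarith
  · rw [key μ, hsum]; ring
end

section
/- Let F : ℝ → ℝ be strictly convex and differentiable, and let B_F(p:q) := F(p) − F(q) − (p − q)·F'(q). Let p_1, ..., p_k ∈ ℝ be prototypes with additive weights a_1, ..., a_k ∈ ℝ. Then for each j, the additively-weighted Bregman Voronoi cell V_j := {x ∈ ℝ : B_F(x:p_j) + a_j ≤ B_F(x:p_l) + a_l for all l ∈ {1,...,k}} is order-connected (an interval). -/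
theorem stmt9 (F : ℝ → ℝ) (hF : StrictConvexOn ℝ Set.univ F)
    (hFd : Differentiable ℝ F)
    (k : ℕ) (p a : Fin k → ℝ) (j : Fin k) :
    Set.OrdConnected
      {x : ℝ | ∀ l : Fin k, breg F x (p j) + a j ≤ breg F x (p l) + a l} := by
  constructor
  intro x hx z hz y hy l
  have hx' := hx l
  have hz' := hz l
  have h1 : x ≤ y := hy.1
  have h2 : y ≤ z := hy.2
  simp only [breg] at *
  rcases le_total (deriv F (p l)) (deriv F (p j)) with h | h
  · nlinarith [mul_nonneg (sub_nonneg.2 h1) (sub_nonneg.2 h)]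
  · nlinarith [mul_nonneg (sub_nonneg.2 h2) (sub_nonneg.2 h)]
end

section
/- Let d : ℝ × ℝ → ℝ be a dissimilarity function such that for every pair of prototypes p, q ∈ ℝ the dominance region {x ∈ ℝ : d(x,p) ≤ d(x,q)} is order-connected. Let X be a finite set of reals and let p_1, ..., p_k ∈ ℝ be any k prototypes. Then there exists a partition of X into k (possibly empty) clusters C_1, ..., C_k such that each C_j is of the form X ∩ I_j for some order-connected set I_j ⊆ ℝ, and Σ_{j=1}^k Σ_{x ∈ C_j} d(x, p_j) = Σ_{x ∈ X} min_{j ∈ {1,...,k}} d(x, p_j). In particular, under this Voronoi-connectedness condition, an optimal center-based clustering can always be realized by contiguous interval clusters. -/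
open Finset

lemma stmt10_aux (d : ℝ → ℝ → ℝ)
    (hd : ∀ p q : ℝ, Set.OrdConnected {x : ℝ | d x p ≤ d x q})
    (k : ℕ) (p : Fin k → ℝ) :
    ∀ n (X : Finset ℝ), X.card ≤ n → ∀ J : Finset (Fin k),
      (∀ x ∈ X, ∃ j ∈ J, ∀ l, d x (p j) ≤ d x (p l)) →
      ∃ C : Fin k → Finset ℝ,
        (∀ j, C j ⊆ X) ∧
        (∀ x ∈ X, ∃! j, x ∈ C j) ∧
        (∀ j, ∃ I : Set ℝ, I.OrdConnected ∧ (C j : Set ℝ) = (X : Set ℝ) ∩ I) ∧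
        (∀ j, ∀ x ∈ C j, ∀ l, d x (p j) ≤ d x (p l)) ∧
        (∀ j, j ∉ J → C j = ∅) := by
  classical
  intro n
  induction n with
  | zero =>
    intro X hX J _
    have hXe : X = ∅ := Finset.card_eq_zero.mp (Nat.le_zero.mp hX)
    subst hXe
    refine ⟨fun _ => ∅, by simp, by simp, fun j => ⟨∅, Set.ordConnected_empty, by simp⟩,
      by simp, by simp⟩
  | succ n ih =>
    intro X hXcard J hcov
    rcases X.eq_empty_or_nonempty with rfl | hX
    · refine ⟨fun _ => ∅, by simp, by simp, fun j => ⟨∅, Set.ordConnected_empty, by simp⟩,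
        by simp, by simp⟩
    · set x0 := X.min' hX with hx0def
      have hx0X : x0 ∈ X := X.min'_mem hX
      obtain ⟨j, hjJ, hjmin⟩ := hcov x0 hx0X
      set T : Finset ℝ := X.filter (fun y => ∀ l, d y (p j) ≤ d y (p l)) with hTdef
      have hTne : T.Nonempty := ⟨x0, Finset.mem_filter.2 ⟨hx0X, hjmin⟩⟩
      set m := T.max' hTne with hmdef
      have hmX : m ∈ X := (Finset.mem_filter.1 (T.max'_mem hTne)).1
      have hmmin : ∀ l, d m (p j) ≤ d m (p l) := (Finset.mem_filter.1 (T.max'_mem hTne)).2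
      set B : Finset ℝ := X.filter (fun y => y ≤ m) with hBdef
      have hx0m : x0 ≤ m := T.le_max' x0 (Finset.mem_filter.2 ⟨hx0X, hjmin⟩)
      have hx0B : x0 ∈ B := Finset.mem_filter.2 ⟨hx0X, hx0m⟩
      have hBmin : ∀ y ∈ B, ∀ l, d y (p j) ≤ d y (p l) := by
        intro y hy l
        obtain ⟨hyX, hym⟩ := Finset.mem_filter.1 hy
        have hx0y : x0 ≤ y := X.min'_le y hyX
        exact (hd (p j) (p l)).out (hjmin l) (hmmin l) ⟨hx0y, hym⟩
      set X' : Finset ℝ := X.filter (fun y => m < y) with hX'def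
      have hX'sub : X' ⊆ X := Finset.filter_subset _ _
      have hX'card : X'.card ≤ n := by
        have hssub : X' ⊂ X := by
          refine Finset.ssubset_iff_of_subset hX'sub |>.2 ⟨x0, hx0X, ?_⟩
          simp only [hX'def, Finset.mem_filter, not_and, not_lt]
          intro _; exact hx0m
        have := Finset.card_lt_card hssub
        omega
      have hcov' : ∀ x ∈ X', ∃ j' ∈ J.erase j, ∀ l, d x (p j') ≤ d x (p l) := by
        intro x hx
        obtain ⟨hxX, hmx⟩ := Finset.mem_filter.1 hx
        obtain ⟨j', hj'J, hj'min⟩ := hcov x hxX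
        refine ⟨j', Finset.mem_erase.2 ⟨?_, hj'J⟩, hj'min⟩
        rintro rfl
        have hxT : x ∈ T := Finset.mem_filter.2 ⟨hxX, hj'min⟩
        exact absurd (T.le_max' x hxT) (not_le.2 hmx)
      obtain ⟨C', hC'sub, hC'part, hC'int, hC'min, hC'emp⟩ :=
        ih X' hX'card (J.erase j) hcov'
      have hC'j : C' j = ∅ := hC'emp j (by simp)
      refine ⟨Function.update C' j B, ?_, ?_, ?_, ?_, ?_⟩
      · intro l
        by_cases hl : l = j
        · subst hl; simp only [Function.update_self]; exact Finset.filter_subset _ _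
        · simp only [Function.update_of_ne hl]
          exact (hC'sub l).trans hX'sub
      · intro x hxX
        by_cases hxm : x ≤ m
        · refine ⟨j, by
            show x ∈ Function.update C' j B j
            rw [Function.update_self]
            exact Finset.mem_filter.2 ⟨hxX, hxm⟩, ?_⟩
          intro l hl
          by_contra hlj
          rw [Function.update_of_ne hlj] at hl
          have := (Finset.mem_filter.1 (hC'sub l hl)).2
          exact absurd hxm (not_le.2 this)
        · have hxX' : x ∈ X' := Finset.mem_filter.2 ⟨hxX, not_le.1 hxm⟩
          obtain ⟨l, hl, hluniq⟩ := hC'part x hxX'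
          have hlj : l ≠ j := by
            rintro rfl; rw [hC'j] at hl; exact absurd hl (Finset.notMem_empty x)
          refine ⟨l, by
            show x ∈ Function.update C' j B l
            rwa [Function.update_of_ne hlj], ?_⟩
          intro l' hl'
          by_cases hl'j : l' = j
          · subst hl'j
            rw [Function.update_self] at hl'
            exact absurd (Finset.mem_filter.1 hl').2 hxm
          · rw [Function.update_of_ne hl'j] at hl'
            exact hluniq l' hl'
      · intro l
        by_cases hl : l = j
        · subst hl
          refine ⟨Set.Iic m, Set.ordConnected_Iic, ?_⟩
          simp only [Function.update_self, hBdef, Finset.coe_filter]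
          ext y; simp [Set.mem_Iic]
        · obtain ⟨I', hI', hEq⟩ := hC'int l
          refine ⟨Set.Ioi m ∩ I', Set.ordConnected_Ioi.inter hI', ?_⟩
          rw [Function.update_of_ne hl, hEq]
          have : (X' : Set ℝ) = (X : Set ℝ) ∩ Set.Ioi m := by
            simp only [hX'def, Finset.coe_filter]
            ext y; simp [Set.mem_Ioi]
          rw [this, Set.inter_assoc]
      · intro l x hx
        by_cases hl : l = j
        · subst hl; rw [Function.update_self] at hx; exact hBmin x hx
        · rw [Function.update_of_ne hl] at hx; exact hC'min l x hx
      · intro l hl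
        have hlj : l ≠ j := by rintro rfl; exact hl hjJ
        rw [Function.update_of_ne hlj]
        exact hC'emp l (fun h => hl (Finset.mem_of_mem_erase h))

theorem stmt10 (d : ℝ → ℝ → ℝ)
    (hd : ∀ p q : ℝ, Set.OrdConnected {x : ℝ | d x p ≤ d x q})
    (X : Finset ℝ) (k : ℕ) (hk : 1 ≤ k) (p : Fin k → ℝ) :
    ∃ C : Fin k → Finset ℝ,
      (∀ j, C j ⊆ X) ∧
      (∀ x ∈ X, ∃! j : Fin k, x ∈ C j) ∧
      (∀ j, ∃ I : Set ℝ, I.OrdConnected ∧ (C j : Set ℝ) = (X : Set ℝ) ∩ I) ∧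
      (∑ j : Fin k, ∑ x ∈ C j, d x (p j)) = ∑ x ∈ X, ⨅ l : Fin k, d x (p l) := by
  classical
  haveI : NeZero k := ⟨by omega⟩
  have hcov : ∀ x ∈ X, ∃ j ∈ (Finset.univ : Finset (Fin k)), ∀ l, d x (p j) ≤ d x (p l) := by
    intro x _
    obtain ⟨j, _, hj⟩ := Finset.exists_min_image Finset.univ (fun l => d x (p l))
      Finset.univ_nonempty
    exact ⟨j, Finset.mem_univ j, fun l => hj l (Finset.mem_univ l)⟩
  obtain ⟨C, hsub, hpart, hint, hmin, _⟩ :=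
    stmt10_aux d hd k p X.card X le_rfl Finset.univ hcov
  refine ⟨C, hsub, hpart, hint, ?_⟩
  have hXeq : X = Finset.univ.biUnion C := by
    ext x
    simp only [Finset.mem_biUnion, Finset.mem_univ, true_and]
    constructor
    · intro hx
      obtain ⟨j, hj, _⟩ := hpart x hx
      exact ⟨j, hj⟩
    · rintro ⟨j, hj⟩
      exact hsub j hj
  have hdisj : ((Finset.univ : Finset (Fin k)) : Set (Fin k)).PairwiseDisjoint C := by
    intro i _ j _ hij
    refine Finset.disjoint_left.2 fun x hxi hxj => ?_
    obtain ⟨l, _, hluniq⟩ := hpart x (hsub i hxi)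
    exact hij ((hluniq i hxi).trans (hluniq j hxj).symm)
  have hinner : ∀ j : Fin k, ∑ x ∈ C j, d x (p j) = ∑ x ∈ C j, ⨅ l : Fin k, d x (p l) := by
    intro j
    refine Finset.sum_congr rfl fun x hx => ?_
    refine le_antisymm (le_ciInf fun l => hmin j x hx l) ?_
    exact ciInf_le (Set.Finite.bddBelow (Set.finite_range _)) j
  calc ∑ j : Fin k, ∑ x ∈ C j, d x (p j)
      = ∑ j : Fin k, ∑ x ∈ C j, ⨅ l : Fin k, d x (p l) := by
        exact Finset.sum_congr rfl fun j _ => hinner j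
    _ = ∑ x ∈ Finset.univ.biUnion C, ⨅ l : Fin k, d x (p l) :=
        (Finset.sum_biUnion hdisj).symm
    _ = ∑ x ∈ X, ⨅ l : Fin k, d x (p l) := by rw [← hXeq]
end

section
/- Let ψ : ℝ → ℝ be strictly convex and differentiable, and let F : ℝ → ℝ be differentiable and satisfy F(ψ'(θ)) = θ·ψ'(θ) − ψ(θ) and F'(ψ'(θ)) = θ for all θ ∈ ℝ. Let B_F(p:q) := F(p) − F(q) − (p − q)·F'(q). Then for every x ∈ ℝ and all parameters θ_1, θ_2 ∈ ℝ: θ_1·x − ψ(θ_1) ≥ θ_2·x − ψ(θ_2) if and only if B_F(x : ψ'(θ_1)) ≤ B_F(x : ψ'(θ_2)). That is, maximizing the exponential-family log-likelihood at x over parameters is equivalent to minimizing the Bregman divergence from x to the corresponding expectation parameters. -/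
theorem stmt12 (ψ F : ℝ → ℝ)
    (hψ : StrictConvexOn ℝ Set.univ ψ) (hψd : Differentiable ℝ ψ)
    (hFd : Differentiable ℝ F)
    (hdual₁ : ∀ θ : ℝ, F (deriv ψ θ) = θ * deriv ψ θ - ψ θ)
    (hdual₂ : ∀ θ : ℝ, deriv F (deriv ψ θ) = θ) :
    ∀ x θ₁ θ₂ : ℝ,
      (θ₂ * x - ψ θ₂ ≤ θ₁ * x - ψ θ₁ ↔
        breg F x (deriv ψ θ₁) ≤ breg F x (deriv ψ θ₂)) := by
  intro x θ₁ θ₂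
  simp only [breg, hdual₁, hdual₂]
  constructor <;> intro h <;> nlinarith
end

section
/- Let F : ℝ → ℝ be twice continuously differentiable and strictly convex, and let B_F(p:q) := F(p) − F(q) − (p − q)·F'(q). If B_F is symmetric, i.e., B_F(p:q) = B_F(q:p) for all p, q ∈ ℝ, then F'' is constant, and consequently there exist λ > 0 and a, b ∈ ℝ with F(x) = λx² + ax + b for all x, i.e., B_F(p:q) = λ(p−q)² is a rescaled squared Euclidean distance. -/
theorem stmt16 (F : ℝ → ℝ) (hF2 : ContDiff ℝ 2 F)
    (hF : StrictConvexOn ℝ Set.univ F)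
    (hsym : ∀ p q : ℝ, breg F p q = breg F q p) :
    (∀ x y : ℝ, deriv (deriv F) x = deriv (deriv F) y) ∧
    ∃ lam : ℝ, 0 < lam ∧ ∃ a b : ℝ,
      (∀ x : ℝ, F x = lam * x ^ 2 + a * x + b) ∧
      (∀ p q : ℝ, breg F p q = lam * (p - q) ^ 2) := by
  have hd1 : Differentiable ℝ F := hF2.differentiable (by norm_num)
  have hd2 : Differentiable ℝ (deriv F) := by
    have h2 : ContDiff ℝ ((1:ℕ) + 1) F := by exact_mod_cast hF2
    exact ((contDiff_succ_iff_deriv.mp h2).2.2).differentiable (by simp)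
  -- symmetry identity
  have hid : ∀ p q : ℝ, 2 * (F p - F q) - (p - q) * (deriv F p + deriv F q) = 0 := by
    intro p q
    have := hsym p q
    simp only [breg] at this
    ring_nf
    ring_nf at this
    linarith
  -- differentiate in p
  have key1 : ∀ p q : ℝ, deriv F p - deriv F q = (p - q) * deriv (deriv F) p := by
    intro p q
    have h2 : HasDerivAt (fun p => 2 * (F p - F q)) (2 * deriv F p) p :=
      ((hd1 p).hasDerivAt.sub_const _).const_mul 2
    have h5 : HasDerivAt (fun p => (p - q) * (deriv F p + deriv F q))
        (1 * (deriv F p + deriv F q) + (p - q) * deriv (deriv F) p) p :=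
      ((hasDerivAt_id p).sub_const q).mul ((hd2 p).hasDerivAt.add_const _)
    have h6 := h2.sub h5
    have hz : HasDerivAt (fun p => 2 * (F p - F q) - (p - q) * (deriv F p + deriv F q)) 0 p := by
      have heq : (fun p => 2 * (F p - F q) - (p - q) * (deriv F p + deriv F q)) =
          fun _ => (0 : ℝ) := funext fun p => hid p q
      rw [heq]; exact hasDerivAt_const _ _
    have := h6.unique hz
    linarith [this]
  -- differentiate in q
  have key2 : ∀ p q : ℝ, deriv F p - deriv F q = (p - q) * deriv (deriv F) q := by
    intro p q
    have h2 : HasDerivAt (fun q => 2 * (F p - F q)) (2 * (-deriv F q)) q := by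
      simpa using ((hasDerivAt_const q (F p)).sub (hd1 q).hasDerivAt).const_mul 2
    have h5 : HasDerivAt (fun q => (p - q) * (deriv F p + deriv F q))
        ((-1) * (deriv F p + deriv F q) + (p - q) * deriv (deriv F) q) q := by
      have hpq : HasDerivAt (fun q : ℝ => p - q) (-1) q := by
        simpa [Pi.sub_def] using (hasDerivAt_const q p).sub (hasDerivAt_id q)
      simpa [Pi.mul_def, Pi.add_def] using hpq.mul ((hasDerivAt_const q (deriv F p)).add (hd2 q).hasDerivAt)
    have h6 := h2.sub h5
    have hz : HasDerivAt (fun q => 2 * (F p - F q) - (p - q) * (deriv F p + deriv F q)) 0 q := by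
      have heq : (fun q => 2 * (F p - F q) - (p - q) * (deriv F p + deriv F q)) =
          fun _ => (0 : ℝ) := funext fun q => hid p q
      rw [heq]; exact hasDerivAt_const _ _
    have := h6.unique hz
    linarith [this]
  -- F'' constant
  have hconst : ∀ x y : ℝ, deriv (deriv F) x = deriv (deriv F) y := by
    intro x y
    rcases eq_or_ne x y with rfl | hxy
    · rfl
    · have h1 := key1 x y
      have h2 := key2 x y
      have hxy' : x - y ≠ 0 := sub_ne_zero.mpr hxy
      field_simp at h1 h2
      have := h1.symm.trans h2
      exact mul_left_cancel₀ hxy' this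
  set c := deriv (deriv F) 0 with hc
  -- F' formula
  have hF' : ∀ x : ℝ, deriv F x = deriv F 0 + c * x := by
    intro x
    have := key2 x 0
    simp at this
    linarith
  -- F formula
  have hFx : ∀ x : ℝ, F x = c / 2 * x ^ 2 + deriv F 0 * x + F 0 := by
    intro x
    have h := hid x 0
    rw [hF' x, hF' 0] at h
    ring_nf at h ⊢
    nlinarith [h]
  -- c > 0 from strict convexity
  have hcpos : 0 < c := by
    have h := hF.2 (Set.mem_univ (0:ℝ)) (Set.mem_univ (1:ℝ)) zero_ne_one
      (by norm_num : (0:ℝ) < 1/2) (by norm_num : (0:ℝ) < 1/2) (by norm_num)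
    rw [hFx 0, hFx 1, hFx ((1/2 : ℝ) • (0:ℝ) + (1/2 : ℝ) • (1:ℝ))] at h
    norm_num at h
    nlinarith [h]
  refine ⟨hconst, c / 2, by linarith, deriv F 0, F 0, fun x => hFx x, ?_⟩
  intro p q
  simp only [breg, hFx p, hFx q, hF' q]
  ring
end
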